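/- Let K be the abstract simplicial complex on [n] whose simplexes are all subsets of cardinality at most d, where 1 ≤ d ≤ n. Then the maximum over all choices of s simplexes J_1, ..., J_s of K of the quantity ∑_{ℓ=1}^{s} |J_ℓ| − |⋂_{ℓ=1}^{s} J_ℓ| equals min{s·d, (s−1)·n}. -/
import Mathlib

lemma aux_card_filter_Ico (n a b : ℕ) (hb : b ≤ n) :
    (Finset.univ.filter (fun x : Fin n => a ≤ x.val ∧ x.val < b)).card = b - a := by
  rw [← Nat.card_Ico]
  apply Finset.card_bij (fun x _ => x.val)
  · intro x hx
    simp only [Finset.mem_filter] at hx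
    simp only [Finset.mem_Ico]
    exact hx.2
  · intro x _ y _ h
    exact Fin.val_injective h
  · intro y hy
    simp only [Finset.mem_Ico] at hy
    exact ⟨⟨y, lt_of_lt_of_le hy.2 hb⟩, by simp [hy], rfl⟩

lemma aux_card_filter_not (n a b : ℕ) (hb : b ≤ n) :
    (Finset.univ.filter (fun x : Fin n => ¬(a ≤ x.val ∧ x.val < b))).card = n - (b - a) := by
  have h1 := aux_card_filter_Ico n a b hb
  have h2 := Finset.card_filter_add_card_filter_not
    (s := (Finset.univ : Finset (Fin n))) (p := fun x : Fin n => a ≤ x.val ∧ x.val < b)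
  simp only [Finset.card_univ, Fintype.card_fin] at h2
  omega

lemma aux_mem_inf_univ_iff {α β : Type*} [Fintype β] [Fintype α] [DecidableEq α]
    (J : β → Finset α) (x : α) :
    x ∈ Finset.univ.inf J ↔ ∀ i, x ∈ J i := by
  simp only [← Finset.singleton_subset_iff, ← Finset.le_iff_subset]
  constructor
  · intro h i
    exact h.trans (Finset.inf_le (Finset.mem_univ i))
  · intro h
    exact Finset.le_inf fun i _ => h i

theorem stmt_6 (n d s : ℕ) (hd1 : 1 ≤ d) (hdn : d ≤ n) (hs : 2 ≤ s) :
    IsGreatest {k : ℕ | ∃ J : Fin s → Finset (Fin n), (∀ i, (J i).card ≤ d) ∧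
      k = (∑ i, (J i).card) - (Finset.univ.inf J).card}
      (min (s * d) ((s - 1) * n)) := by
  have hmul : s * (n - d) + s * d = s * n := by
    rw [← Nat.mul_add]
    congr 1
    omega
  have hsn : (s - 1) * n + n = s * n := by
    have : s - 1 + 1 = s := by omega
    rw [← Nat.succ_mul]
    congr 1
  constructor
  · -- membership
    set m := n - d with hm
    set a : Fin s → ℕ := fun i => min (i.val * m) (n - m) with ha
    have hbound : ∀ i : Fin s, a i + m ≤ n := by
      intro i
      have : a i ≤ n - m := min_le_right _ _
      omega
    refine ⟨fun i => Finset.univ.filter (fun x : Fin n => ¬(a i ≤ x.val ∧ x.val < a i + m)),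
      ?_, ?_⟩
    · intro i
      rw [aux_card_filter_not n (a i) (a i + m) (hbound i)]
      omega
    · have hcard : ∀ i : Fin s,
          (Finset.univ.filter (fun x : Fin n => ¬(a i ≤ x.val ∧ x.val < a i + m))).card = d := by
        intro i
        rw [aux_card_filter_not n (a i) (a i + m) (hbound i)]
        omega
      have hsum : (∑ i : Fin s, (Finset.univ.filter
          (fun x : Fin n => ¬(a i ≤ x.val ∧ x.val < a i + m))).card) = s * d := by
        rw [Finset.sum_congr rfl (fun i _ => hcard i)]
        simp [Finset.sum_const, Finset.card_univ, Nat.smul_one_eq_cast]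
      have hinf : Finset.univ.inf (fun i : Fin s => Finset.univ.filter
          (fun x : Fin n => ¬(a i ≤ x.val ∧ x.val < a i + m))) =
          Finset.univ.filter (fun x : Fin n => s * m ≤ x.val) := by
        ext x
        rw [aux_mem_inf_univ_iff]
        simp only [Finset.mem_filter, Finset.mem_univ, true_and]
        constructor
        · intro h
          by_contra hx
          push_neg at hx
          have hm0 : 0 < m := by
            rcases Nat.eq_zero_or_pos m with h0 | h0
            · rw [h0, Nat.mul_zero] at hx
              omega
            · exact h0
          have hi : x.val / m < s := (Nat.div_lt_iff_lt_mul hm0).mpr hx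
          have h1 : (x.val / m) * m ≤ x.val := Nat.div_mul_le_self _ _
          have h2 : (x.val / m) * m + x.val % m = x.val := Nat.div_add_mod' _ _
          have h3 : x.val % m < m := Nat.mod_lt _ hm0
          have := h ⟨x.val / m, hi⟩
          have hxn : x.val < n := x.isLt
          simp only [ha] at this
          omega
        · intro hx i
          have hi1 : (i.val + 1) * m ≤ s * m := Nat.mul_le_mul_right m (by omega)
          have hsucc : (i.val + 1) * m = i.val * m + m := Nat.succ_mul _ _
          have hxn : x.val < n := x.isLt
          simp only [ha]
          omega
      rw [hsum, hinf]
      have hIcard : (Finset.univ.filter (fun x : Fin n => s * m ≤ x.val)).card = n - s * m := by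
        have heq : (Finset.univ.filter (fun x : Fin n => s * m ≤ x.val)) =
            (Finset.univ.filter (fun x : Fin n => s * m ≤ x.val ∧ x.val < n)) := by
          apply Finset.filter_congr
          intro x _
          simp [x.isLt]
        rw [heq, aux_card_filter_Ico n (s * m) n le_rfl]
      rw [hIcard]
      omega
  · -- upper bound
    rintro k ⟨J, hJ, rfl⟩
    set A := Finset.univ.inf J with hA
    have hAn : A.card ≤ n := by
      have := Finset.card_le_univ A
      simpa using this
    have h1 : ∑ i, (J i).card ≤ s * d := by
      calc ∑ i, (J i).card ≤ ∑ _i : Fin s, d := Finset.sum_le_sum (fun i _ => hJ i)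
        _ = s * d := by simp [Finset.sum_const, Finset.card_univ, mul_comm]
    have h2 : ∑ i, (J i).card ≤ (s - 1) * n + A.card := by
      have hswap : ∑ i, (J i).card =
          ∑ x : Fin n, (Finset.univ.filter (fun i => x ∈ J i)).card := by
        have hc : ∀ i, (J i).card = ∑ x : Fin n, if x ∈ J i then 1 else 0 := by
          intro i
          rw [← Finset.card_filter]
          congr 1
          ext x
          simp
        rw [Finset.sum_congr rfl (fun i _ => hc i), Finset.sum_comm]
        simp only [Finset.card_filter]
      have hb1 : ∀ x ∈ A, (Finset.univ.filter (fun i => x ∈ J i)).card ≤ s := by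
        intro x _
        calc (Finset.univ.filter (fun i => x ∈ J i)).card ≤ (Finset.univ : Finset (Fin s)).card :=
          Finset.card_filter_le _ _
        _ = s := by simp
      have hb2 : ∀ x ∈ Aᶜ, (Finset.univ.filter (fun i => x ∈ J i)).card ≤ s - 1 := by
        intro x hx
        rw [Finset.mem_compl] at hx
        have : ¬ ∀ i, x ∈ J i := by
          intro h
          exact hx ((aux_mem_inf_univ_iff J x).mpr h)
        push_neg at this
        obtain ⟨i0, hi0⟩ := this
        have hsub : (Finset.univ.filter (fun i => x ∈ J i)) ⊆ Finset.univ.erase i0 := by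
          intro i hi
          simp only [Finset.mem_filter] at hi
          apply Finset.mem_erase.mpr
          exact ⟨fun h => hi0 (h ▸ hi.2), Finset.mem_univ i⟩
        calc (Finset.univ.filter (fun i => x ∈ J i)).card ≤ (Finset.univ.erase i0).card :=
            Finset.card_le_card hsub
          _ = s - 1 := by
            rw [Finset.card_erase_of_mem (Finset.mem_univ i0)]
            simp
      have hsplit : ∑ x : Fin n, (Finset.univ.filter (fun i => x ∈ J i)).card =
          ∑ x ∈ A, (Finset.univ.filter (fun i => x ∈ J i)).card +
          ∑ x ∈ Aᶜ, (Finset.univ.filter (fun i => x ∈ J i)).card :=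
        (Finset.sum_add_sum_compl A _).symm
      have hs1 : ∑ x ∈ A, (Finset.univ.filter (fun i => x ∈ J i)).card ≤ A.card * s := by
        have := Finset.sum_le_card_nsmul A _ s hb1
        simpa [smul_eq_mul] using this
      have hs2 : ∑ x ∈ Aᶜ, (Finset.univ.filter (fun i => x ∈ J i)).card ≤
          (n - A.card) * (s - 1) := by
        have := Finset.sum_le_card_nsmul Aᶜ _ (s - 1) hb2
        have hcc : (Aᶜ : Finset (Fin n)).card = n - A.card := by
          rw [Finset.card_compl]
          simp
        simpa [smul_eq_mul, hcc] using this
      have key : ∀ N c t : ℕ, c ≤ N → c * (t + 1) + (N - c) * t = t * N + c := by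
        intro N c t hc
        obtain ⟨b, rfl⟩ : ∃ b, N = c + b := ⟨N - c, by omega⟩
        have hcb : c + b - c = b := by omega
        rw [hcb]
        ring
      have heq : A.card * s + (n - A.card) * (s - 1) = (s - 1) * n + A.card := by
        have := key n A.card (s - 1) hAn
        rw [show s - 1 + 1 = s from by omega] at this
        exact this
      omega
    apply le_min <;> omega
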